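/- There are infinitely many positive integers N that are not representable as x² + y² + z⁴ with positive integers x, y, z; in fact, p² is not so representable for every prime p ≡ 7 (mod 8). -/

import Mathlib

/-- Any natural number `≡ 3 (mod 4)` has a prime factor `q ≡ 3 (mod 4)`
occurring with odd multiplicity. -/
lemma exists_odd_factorization (m : ℕ) (hm : m % 4 = 3) :
    ∃ q : ℕ, q.Prime ∧ q % 4 = 3 ∧ Odd (m.factorization q) := by
  induction m using Nat.strong_induction_on with
  | _ m ih =>
    have hm0 : m ≠ 0 := by omega
    have hm1 : m ≠ 1 := by omega
    obtain ⟨q, hq, hqd⟩ := Nat.exists_prime_and_dvd hm1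
    have hq2 : q ≠ 2 := by
      rintro rfl
      obtain ⟨c, rfl⟩ := hqd
      omega
    have hqodd : q % 2 = 1 := hq.eq_two_or_odd.resolve_left hq2
    have hq4 : q % 4 = 1 ∨ q % 4 = 3 := by omega
    rcases hq4 with h1 | h3
    · -- q ≡ 1 (mod 4): pass to m / q
      obtain ⟨m', rfl⟩ := hqd
      have hm'0 : m' ≠ 0 := by rintro rfl; simp at hm0
      have hm'4 : m' % 4 = 3 := by
        have := Nat.mul_mod q m' 4
        rw [h1] at this
        omega
      have hm'lt : m' < q * m' := by
        have : 1 < q := hq.one_lt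
        calc m' = 1 * m' := (one_mul m').symm
          _ < q * m' := (Nat.mul_lt_mul_right (Nat.pos_of_ne_zero hm'0)).mpr this
      obtain ⟨q', hq', hq'3, hq'odd⟩ := ih m' hm'lt hm'4
      refine ⟨q', hq', hq'3, ?_⟩
      have hne : q' ≠ q := by omega
      rw [Nat.factorization_mul (Nat.Prime.ne_zero hq) hm'0]
      have : q.factorization q' = 0 := by
        rw [hq.factorization, Finsupp.single_apply, if_neg (by omega : q ≠ q')]
      simp [this, hq'odd]
    · -- q ≡ 3 (mod 4)
      set k := m.factorization q with hk
      by_cases hkodd : Odd k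
      · exact ⟨q, hq, h3, hkodd⟩
      · have hkeven : Even k := Nat.not_odd_iff_even.mp hkodd
        set m' := ordCompl[q] m with hm'
        have hfac : q ^ k * m' = m := Nat.ordProj_mul_ordCompl_eq_self m q
        have hm'0 : m' ≠ 0 := by
          rintro h; rw [h, mul_zero] at hfac; exact hm0 hfac.symm
        have hk1 : 1 ≤ k := (Nat.Prime.factorization_pos_of_dvd hq hm0 hqd)
        have hqk4 : q ^ k % 4 = 1 := by
          obtain ⟨j, hj⟩ := hkeven
          rw [hj]
          have h2 : q ^ (j + j) = (q ^ 2) ^ j := by ring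
          rw [h2, Nat.pow_mod]
          have : q ^ 2 % 4 = 1 := by
            have := Nat.pow_mod q 2 4
            rw [h3] at this
            omega
          rw [this]
          simp
        have hm'4 : m' % 4 = 3 := by
          have := Nat.mul_mod (q ^ k) m' 4
          rw [hfac, hqk4] at this
          omega
        have hm'lt : m' < m := by
          rw [← hfac]
          have h1 : 1 < q ^ k := Nat.one_lt_pow (by omega) hq.one_lt
          calc m' = 1 * m' := (one_mul m').symm
            _ < q ^ k * m' := (Nat.mul_lt_mul_right (Nat.pos_of_ne_zero hm'0)).mpr h1
        obtain ⟨q', hq', hq'3, hq'odd⟩ := ih m' hm'lt hm'4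
        refine ⟨q', hq', hq'3, ?_⟩
        have hq'dvd : q' ∣ m' := Nat.dvd_of_factorization_pos (by
          intro h; rw [h] at hq'odd; simp [Nat.odd_iff] at hq'odd)
        have hne : q' ≠ q := by
          rintro rfl
          exact Nat.not_dvd_ordCompl hq hm0 hq'dvd
        have : m.factorization q' = m'.factorization q' := by
          conv_lhs => rw [← hfac]
          rw [Nat.factorization_mul (pow_ne_zero k hq.ne_zero) hm'0,
            Nat.factorization_pow]
          have hq0 : q.factorization q' = 0 := by
            rw [hq.factorization, Finsupp.single_apply, if_neg (by omega : q ≠ q')]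
          simp [hq0]
        rw [this]
        exact hq'odd

lemma no_rep (p : ℕ) (hp : p.Prime) (hp8 : p % 8 = 7) :
    ¬ ∃ x y z : ℕ, 0 < x ∧ 0 < y ∧ 0 < z ∧ x ^ 2 + y ^ 2 + z ^ 4 = p ^ 2 := by
  rintro ⟨x, y, z, hx, hy, hz, heq⟩
  set w := z ^ 2 with hw
  have hw1 : 1 ≤ w := Nat.one_le_iff_ne_zero.mpr (pow_ne_zero 2 hz.ne')
  have hz4 : z ^ 4 = w * w := by rw [hw]; ring
  have hwp : w < p := by
    nlinarith [sq_nonneg x, sq_nonneg y, hx, hy, hp.pos]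
  set a := p - w with ha
  set b := p + w with hb
  have heq' : x ^ 2 + y ^ 2 + w * w = p ^ 2 := by rw [← hz4]; exact heq
  have e1 : a * b + w * w = p ^ 2 := by
    obtain ⟨c, hc⟩ := Nat.le.dest hwp.le
    have hac : a = c := by omega
    rw [hac, hb, ← hc]
    ring
  have hab : a * b = x ^ 2 + y ^ 2 := by
    have := e1.trans heq'.symm
    omega
  have ha0 : a ≠ 0 := by omega
  have hb0 : b ≠ 0 := by omega
  -- find a prime q ≡ 3 (mod 4) with odd multiplicity in a
  have key : ∃ q : ℕ, q.Prime ∧ q % 4 = 3 ∧ Odd (a.factorization q) := by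
    rcases Nat.even_or_odd z with hze | hzo
    · -- z even : a ≡ 3 (mod 4)
      obtain ⟨t, rfl⟩ := hze
      have hwv : w = 4 * (t * t) := by rw [hw]; ring
      have ha4 : a % 4 = 3 := by omega
      exact exists_odd_factorization a ha4
    · -- z odd : a ≡ 6 (mod 8), a = 2 * m with m ≡ 3 (mod 4)
      obtain ⟨t, rfl⟩ := hzo
      obtain ⟨u, hu⟩ := Nat.even_mul_succ_self t
      have hwv : w = 8 * u + 1 := by
        rw [hw]
        have : (2 * t + 1) ^ 2 = 4 * (t * (t + 1)) + 1 := by ring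
        omega
      have ha8 : a % 8 = 6 := by omega
      set m := a / 2 with hm
      have ham : a = 2 * m := by omega
      have hm4 : m % 4 = 3 := by omega
      obtain ⟨q, hq, hq3, hqodd⟩ := exists_odd_factorization m hm4
      refine ⟨q, hq, hq3, ?_⟩
      rw [ham, Nat.factorization_mul (by norm_num) (by omega)]
      have h2 : (2 : ℕ).factorization q = 0 := by
        rw [Nat.prime_two.factorization, Finsupp.single_apply,
          if_neg (by omega : 2 ≠ q)]
      simp [h2, hqodd]
  obtain ⟨q, hq, hq3, hqodd⟩ := key
  have hqa : q ∣ a := Nat.dvd_of_factorization_pos (by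
    intro h; rw [h] at hqodd; simp [Nat.odd_iff] at hqodd)
  -- q does not divide b
  have hqb : ¬ q ∣ b := by
    intro hdvd
    have hsum : q ∣ 2 * p := by
      have h2p : 2 * p = a + b := by omega
      rw [h2p]; exact Nat.dvd_add hqa hdvd
    have hq3' : 3 ≤ q := by omega
    have hqp : q ∣ p := by
      rcases (Nat.Prime.dvd_mul hq).mp hsum with h | h
      · exact absurd (Nat.le_of_dvd (by norm_num) h) (by omega)
      · exact h
    have : q = p := (Nat.prime_dvd_prime_iff_eq hq hp).mp hqp
    subst this
    have := Nat.le_of_dvd (by omega) hqa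
    omega
  have heven : Even ((x ^ 2 + y ^ 2).factorization q) := by
    have := Nat.eq_sq_add_sq_iff.mp ⟨x, y, rfl⟩ q (Nat.mem_primeFactors.mpr ⟨hq, hab ▸ dvd_mul_of_dvd_left hqa b, hab ▸ mul_ne_zero ha0 hb0⟩) hq3
    rwa [Nat.factorization_def _ hq]
  rw [← hab, Nat.factorization_mul ha0 hb0, Finsupp.add_apply,
    Nat.factorization_eq_zero_of_not_dvd hqb, add_zero] at heven
  exact (Nat.not_odd_iff_even.mpr heven) hqodd

theorem infinitely_many_not_rep_k4 :
    {N : ℕ | ¬ ∃ x y z : ℕ, 0 < x ∧ 0 < y ∧ 0 < z ∧ x ^ 2 + y ^ 2 + z ^ 4 = N}.Infinite ∧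
    ∀ p : ℕ, p.Prime → p % 8 = 7 →
      ¬ ∃ x y z : ℕ, 0 < x ∧ 0 < y ∧ 0 < z ∧ x ^ 2 + y ^ 2 + z ^ 4 = p ^ 2 := by
  constructor
  · have hunit : IsUnit (7 : ZMod 8) := by decide
    have hS : {p : ℕ | p.Prime ∧ (p : ZMod 8) = 7}.Infinite :=
      Nat.infinite_setOfPred_prime_and_eq_mod hunit
    have himg := hS.image (f := fun p => p ^ 2) (by
      intro a ha b hb h
      exact Nat.pow_left_injective (by norm_num) h)
    apply himg.mono
    rintro _ ⟨p, ⟨hp, hp8⟩, rfl⟩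
    have hp8' : p % 8 = 7 := by
      have : (p : ZMod 8) = ((7 : ℕ) : ZMod 8) := by exact_mod_cast hp8
      have := (ZMod.natCast_eq_natCast_iff p 7 8).mp this
      simpa [Nat.ModEq] using this
    exact no_rep p hp hp8'
  · exact no_rep
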